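/- Combining the connectivity and weight hypotheses: if G(P, E(P)) is nicely connected with parameter m = ⌊Φ(|P_S|)⌋ and nicely Δ-weighted with constants A, B, α, β (α < β), then a cycle W output by Algorithm 1 satisfies Γ(W) < 0 (is Δ-contractive with dwell parameter Δ on each vertex) with probability at least 1 − exp(−(1/2)((α−β)/(A+B))² m). -/

import Mathlib

open MeasureTheory Real

lemma hoeffding_core (p h : ℝ) (hp0 : 0 ≤ p) (hp1 : p ≤ 1) (hh : 0 ≤ h) :
    (1 - p) * Real.exp (-(p * h)) + p * Real.exp ((1 - p) * h) ≤ Real.exp (h ^ 2 / 8) := by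
  set D : ℝ → ℝ := fun x => (1 - p) + p * Real.exp x with hDdef
  have hD : ∀ x, 0 < D x := by
    intro x
    rcases lt_or_eq_of_le hp1 with h1 | h1
    · have : 0 < 1 - p := by linarith
      have : 0 ≤ p * Real.exp x := mul_nonneg hp0 (Real.exp_pos x).le
      simp only [hDdef]; linarith
    · simp only [hDdef, ← h1]
      have := Real.exp_pos x; nlinarith
  set t : ℝ → ℝ := fun x => p * Real.exp x / D x with htdef
  have hDderiv : ∀ x, HasDerivAt D (p * Real.exp x) x := by
    intro x
    exact ((Real.hasDerivAt_exp x).const_mul p).const_add (1 - p)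
  have ht01 : ∀ x, 0 ≤ t x ∧ t x ≤ 1 := by
    intro x
    constructor
    · exact div_nonneg (mul_nonneg hp0 (Real.exp_pos x).le) (hD x).le
    · rw [htdef, div_le_one (hD x)]
      simp only [hDdef]; linarith
  set f : ℝ → ℝ := fun x => Real.log (D x) with hfdef
  have hfderiv : ∀ x, HasDerivAt f (t x) x := by
    intro x
    simpa [htdef] using (hDderiv x).log (hD x).ne'
  have htderiv : ∀ x, HasDerivAt t (t x * (1 - t x)) x := by
    intro x
    have hne : (1:ℝ) - p + p * Real.exp x ≠ 0 := by
      have := hD x; simp only [hDdef] at this; linarith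
    have := ((Real.hasDerivAt_exp x).const_mul p).div (hDderiv x) (hD x).ne'
    refine this.congr_deriv ?_
    simp only [htdef, hDdef]
    field_simp
  set φ : ℝ → ℝ := fun x => x / 4 + p - t x with hφdef
  have hφderiv : ∀ x, HasDerivAt φ (1 / 4 - t x * (1 - t x)) x := by
    intro x
    exact ((hasDerivAt_id x).div_const 4 |>.add_const p).sub (htderiv x)
  have hφmono : Monotone φ := by
    apply monotone_of_deriv_nonneg
    · exact fun x => (hφderiv x).differentiableAt
    · intro x
      rw [(hφderiv x).deriv]
      nlinarith [sq_nonneg (t x - 1 / 2)]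
  have hφ0 : φ 0 = 0 := by
    simp only [hφdef, htdef, hDdef]
    rw [Real.exp_zero]
    have : (1 - p) + p * 1 = 1 := by ring
    rw [this]
    ring
  set G : ℝ → ℝ := fun x => x ^ 2 / 8 + p * x - f x with hGdef
  have hGderiv : ∀ x, HasDerivAt G (φ x) x := by
    intro x
    have h1 : HasDerivAt (fun x : ℝ => x ^ 2 / 8 + p * x) (x / 4 + p) x := by
      have := ((hasDerivAt_pow 2 x).div_const 8).add ((hasDerivAt_id x).const_mul p)
      refine this.congr_deriv ?_
      ring
    exact h1.sub (hfderiv x)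
  have hGmono : MonotoneOn G (Set.Ici (0 : ℝ)) := by
    apply monotoneOn_of_deriv_nonneg (convex_Ici 0)
    · exact Continuous.continuousOn
        (continuous_iff_continuousAt.mpr fun x => (hGderiv x).differentiableAt.continuousAt)
    · intro x _
      exact (hGderiv x).differentiableAt.differentiableWithinAt
    · intro x hx
      rw [(hGderiv x).deriv]
      rw [interior_Ici] at hx
      have := hφmono (le_of_lt hx)
      rw [hφ0] at this
      exact this
  have hG0 : G 0 = 0 := by
    simp [hGdef, hfdef, hDdef]
  have hGh : 0 ≤ G h := by
    have := hGmono (Set.self_mem_Ici) (Set.mem_Ici.mpr hh) hh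
    rw [hG0] at this; exact this
  have key : f h - p * h ≤ h ^ 2 / 8 := by
    simp only [hGdef] at hGh; linarith
  have hLHS : (1 - p) * Real.exp (-(p * h)) + p * Real.exp ((1 - p) * h)
      = Real.exp (f h - p * h) := by
    rw [Real.exp_sub, hfdef, Real.exp_log (hD h)]
    simp only [hDdef]
    rw [show (1 - p) * h = h - p * h by ring, Real.exp_sub, Real.exp_neg]
    field_simp
  rw [hLHS]
  exact Real.exp_le_exp.mpr key

lemma integrable_of_ae_abs_le {Ω : Type*} [MeasurableSpace Ω] {μ : Measure Ω}
    [IsFiniteMeasure μ] {f : Ω → ℝ} (hf : AEStronglyMeasurable f μ) {C : ℝ}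
    (h : ∀ᵐ ω ∂μ, |f ω| ≤ C) : Integrable f μ :=
  Integrable.mono' (integrable_const C) hf
    (by filter_upwards [h] with ω hω; simpa [Real.norm_eq_abs] using hω)

lemma exp_convex_bound {a b s x : ℝ} (hab : a < b) (hx : x ∈ Set.Icc a b) :
    Real.exp (s * x) ≤ ((b - x) * Real.exp (s * a) + (x - a) * Real.exp (s * b)) / (b - a) := by
  obtain ⟨hax, hxb⟩ := hx
  have hba : (0:ℝ) < b - a := by linarith
  have hθ1 : 0 ≤ (b - x) / (b - a) := div_nonneg (by linarith) hba.le
  have hθ2 : 0 ≤ (x - a) / (b - a) := div_nonneg (by linarith) hba.le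
  have hsum : (b - x) / (b - a) + (x - a) / (b - a) = 1 := by field_simp; ring
  have hconv := convexOn_exp.2 (Set.mem_univ (s * a)) (Set.mem_univ (s * b)) hθ1 hθ2 hsum
  simp only [smul_eq_mul] at hconv
  have hcomb : (b - x) / (b - a) * (s * a) + (x - a) / (b - a) * (s * b) = s * x := by
    field_simp; ring
  rw [hcomb] at hconv
  calc Real.exp (s * x) ≤ (b - x) / (b - a) * Real.exp (s * a)
        + (x - a) / (b - a) * Real.exp (s * b) := hconv
    _ = ((b - x) * Real.exp (s * a) + (x - a) * Real.exp (s * b)) / (b - a) := by ring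

lemma cond_hoeffding {Ω : Type*} [m0 : MeasurableSpace Ω] {μ : Measure Ω}
    [IsProbabilityMeasure μ] {m : MeasurableSpace Ω} (hm : m ≤ m0)
    {X : Ω → ℝ} {a b mb s : ℝ} (hab : a < b) (hs : 0 ≤ s)
    (hXint : Integrable X μ)
    (hexpint : Integrable (fun ω => Real.exp (s * X ω)) μ)
    (hbdd : ∀ᵐ ω ∂μ, X ω ∈ Set.Icc a b)
    (hmba : a ≤ mb) (hmbb : mb ≤ b)
    (hcond : μ[X|m] ≤ᵐ[μ] fun _ => mb) :
    μ[fun ω => Real.exp (s * X ω)|m] ≤ᵐ[μ]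
      fun _ => Real.exp (s * mb + s ^ 2 * (b - a) ^ 2 / 8) := by
  have hba : (0:ℝ) < b - a := by linarith
  set ea := Real.exp (s * a) with hea
  set eb := Real.exp (s * b) with heb
  have heab : ea ≤ eb := Real.exp_le_exp.mpr (by nlinarith)
  set c₁ := (b * ea - a * eb) / (b - a) with hc₁
  set c₂ := (eb - ea) / (b - a) with hc₂
  have hc₂0 : 0 ≤ c₂ := div_nonneg (by linarith) hba.le
  have hgint : Integrable (fun ω => c₁ + c₂ * X ω) μ :=
    (integrable_const c₁).add (hXint.const_mul c₂)
  -- step 1: condexp mono via convexity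
  have step1 : μ[fun ω => Real.exp (s * X ω)|m] ≤ᵐ[μ] μ[fun ω => c₁ + c₂ * X ω|m] := by
    refine condExp_mono hexpint hgint ?_
    filter_upwards [hbdd] with ω hω
    have := exp_convex_bound (s := s) hab hω
    calc Real.exp (s * X ω) ≤ ((b - X ω) * ea + (X ω - a) * eb) / (b - a) := this
      _ = c₁ + c₂ * X ω := by simp only [hc₁, hc₂]; field_simp; ring
  -- step 2: linearity of condexp
  have step2 : μ[fun ω => c₁ + c₂ * X ω|m] =ᵐ[μ] fun ω => c₁ + c₂ * (μ[X|m]) ω := by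
    have e1 : (fun ω => c₁ + c₂ * X ω) = (fun _ => c₁) + c₂ • X := by
      funext ω; simp [smul_eq_mul]
    rw [e1]
    calc μ[(fun _ => c₁) + c₂ • X|m]
        =ᵐ[μ] μ[fun _ => c₁|m] + μ[c₂ • X|m] :=
          condExp_add (integrable_const _) (hXint.smul c₂) m
      _ =ᵐ[μ] fun ω => c₁ + c₂ * (μ[X|m]) ω := by
          have h1 := condExp_smul (μ := μ) (m := m) c₂ X
          have h2 : μ[fun _ => c₁|m] = fun _ => c₁ := condExp_const hm c₁
          filter_upwards [h1] with ω hω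
          simp only [Pi.add_apply, h2, Pi.smul_apply, smul_eq_mul] at *
          rw [hω]
  -- step 3: bound using hcond and hoeffding_core
  have step3 : (fun ω => c₁ + c₂ * (μ[X|m]) ω) ≤ᵐ[μ]
      fun _ => Real.exp (s * mb + s ^ 2 * (b - a) ^ 2 / 8) := by
    filter_upwards [hcond] with ω hω
    have h1 : c₁ + c₂ * (μ[X|m]) ω ≤ c₁ + c₂ * mb := by nlinarith
    refine h1.trans ?_
    -- apply hoeffding_core with p = (mb - a)/(b - a), h = s * (b - a)
    set p := (mb - a) / (b - a) with hp
    have hp0 : 0 ≤ p := div_nonneg (by linarith) hba.le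
    have hp1 : p ≤ 1 := by rw [hp, div_le_one hba]; linarith
    have hcore := hoeffding_core p (s * (b - a)) hp0 hp1 (by positivity)
    have hph : -(p * (s * (b - a))) = s * a - s * mb := by
      rw [hp]; field_simp; ring
    have hph2 : (1 - p) * (s * (b - a)) = s * b - s * mb := by
      rw [hp]; field_simp; ring
    rw [hph, hph2] at hcore
    have hkey : (1 - p) * Real.exp (s * a - s * mb) + p * Real.exp (s * b - s * mb)
        ≤ Real.exp ((s * (b - a)) ^ 2 / 8) := hcore
    have hexp : c₁ + c₂ * mb
        = Real.exp (s * mb) * ((1 - p) * Real.exp (s * a - s * mb)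
          + p * Real.exp (s * b - s * mb)) := by
      rw [Real.exp_sub, Real.exp_sub]
      simp only [hc₁, hc₂, hp, hea, heb]
      have hem := Real.exp_pos (s * mb)
      field_simp
      ring
    rw [hexp]
    calc Real.exp (s * mb) * ((1 - p) * Real.exp (s * a - s * mb)
          + p * Real.exp (s * b - s * mb))
        ≤ Real.exp (s * mb) * Real.exp ((s * (b - a)) ^ 2 / 8) :=
          mul_le_mul_of_nonneg_left hkey (Real.exp_pos _).le
      _ = Real.exp (s * mb + s ^ 2 * (b - a) ^ 2 / 8) := by
          rw [← Real.exp_add]; ring_nf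
  calc μ[fun ω => Real.exp (s * X ω)|m] ≤ᵐ[μ] μ[fun ω => c₁ + c₂ * X ω|m] := step1
    _ =ᵐ[μ] fun ω => c₁ + c₂ * (μ[X|m]) ω := step2
    _ ≤ᵐ[μ] fun _ => Real.exp (s * mb + s ^ 2 * (b - a) ^ 2 / 8) := step3
set_option maxHeartbeats 1000000

/-- If the graph is nicely connected with parameter `m = ⌊Φ(|P_S|)⌋` (so an
Algorithm-1 cycle `v 0, ..., v (n-1)` has all vertices in `P_S` and length `n ≥ m`) and
nicely Δ-weighted (vertex weights `0 < wV k Δ ≤ B` with conditional mean `β`, edge weights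
in `[−A, A]` with conditional mean `≤ α < β`), then the cycle satisfies
`Γ(W) = Σ (−wV k Δ) + Σ wE k < 0` (is Δ-contractive) with probability at least
`1 − exp(−(1/2)((α−β)/(A+B))² m)`. -/
theorem stmt_15 {Ω P : Type*} [MeasurableSpace Ω] (μ : Measure Ω) [IsProbabilityMeasure μ]
    [Fintype P] (E : P → P → Prop) (PS : Set P)
    (Φ : ℕ → ℝ) (hΦ : Monotone Φ) (m : ℕ) (hm : (m : ℤ) = ⌊Φ PS.ncard⌋) (hm1 : 1 ≤ m)
    (hconn : ∀ j : P, m ≤ {u ∈ PS | E j u}.ncard)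
    (n : ℕ) [NeZero n] (hn : 0 < n) (hnm : m ≤ n)
    (v : Fin n → P) (hvPS : ∀ k, v k ∈ PS)
    (hvinj : Function.Injective v)
    (hvedge : ∀ k : Fin n, E (v k) (v (k + 1)))
    (wV wE : Fin n → Ω → ℝ)
    (hVmeas : ∀ k, Measurable (wV k)) (hEmeas : ∀ k, Measurable (wE k))
    (Δ A B α β : ℝ) (hΔ : 0 < Δ) (hβ : 0 < β) (hβB : β ≤ B) (hA : 0 < A) (hαβ : α < β)
    (hVbdd : ∀ k, ∀ᵐ ω ∂μ, 0 < wV k ω * Δ ∧ wV k ω * Δ ≤ B)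
    (hVcond : ∀ k,
      μ[fun ω => wV k ω * Δ |
        (⨆ (j : Fin n) (_ : j ≠ k), MeasurableSpace.comap (wV j) inferInstance) ⊔
        (⨆ j : Fin n, MeasurableSpace.comap (wE j) inferInstance)]
        =ᵐ[μ] fun _ => β)
    (hEbdd : ∀ k, ∀ᵐ ω ∂μ, wE k ω ∈ Set.Icc (-A) A)
    (hEcond : ∀ k, ∀ᵐ ω ∂μ,
      (μ[wE k |
        (⨆ j : Fin n, MeasurableSpace.comap (wV j) inferInstance) ⊔
        (⨆ (j : Fin n) (_ : j ≠ k), MeasurableSpace.comap (wE j) inferInstance)]) ω ≤ α) :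
    1 - Real.exp (-(1 / 2) * ((α - β) / (A + B)) ^ 2 * m) ≤
      (μ {ω | (∑ k, -(wV k ω * Δ)) + ∑ k, wE k ω < 0}).toReal := by
  classical
  have hB0 : 0 < B := lt_of_lt_of_le hβ hβB
  have hAB : 0 < A + B := by linarith
  -- integrability of the basic random variables
  have hEint : ∀ k, Integrable (wE k) μ := by
    intro k
    refine integrable_of_ae_abs_le (hEmeas k).aestronglyMeasurable (C := A) ?_
    filter_upwards [hEbdd k] with ω hω
    rw [abs_le]
    exact ⟨hω.1, hω.2⟩
  have hVint : ∀ k, Integrable (fun ω => wV k ω * Δ) μ := by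
    intro k
    refine integrable_of_ae_abs_le ((hVmeas k).mul_const Δ).aestronglyMeasurable (C := B) ?_
    filter_upwards [hVbdd k] with ω hω
    rw [abs_le]
    exact ⟨by linarith [hω.1], hω.2⟩
  -- the ambient σ-algebra
  rcases lt_or_ge α (-A) with hcase | hαA
  · -- degenerate case : hypotheses are contradictory
    exfalso
    set k : Fin n := ⟨0, hn⟩
    have hmE : ((⨆ j : Fin n, MeasurableSpace.comap (wV j) inferInstance) ⊔
        (⨆ (j : Fin n) (_ : j ≠ k), MeasurableSpace.comap (wE j) inferInstance)) ≤
        ‹MeasurableSpace Ω› := by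
      refine sup_le (iSup_le fun j => (hVmeas j).comap_le) ?_
      exact iSup_le fun j => iSup_le fun _ => (hEmeas j).comap_le
    have h1 : (fun _ : Ω => (-A : ℝ)) ≤ᵐ[μ]
        μ[wE k|(⨆ j : Fin n, MeasurableSpace.comap (wV j) inferInstance) ⊔
          (⨆ (j : Fin n) (_ : j ≠ k), MeasurableSpace.comap (wE j) inferInstance)] := by
      have := condExp_mono (μ := μ)
        (m := (⨆ j : Fin n, MeasurableSpace.comap (wV j) inferInstance) ⊔
          (⨆ (j : Fin n) (_ : j ≠ k), MeasurableSpace.comap (wE j) inferInstance))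
        (integrable_const (-A : ℝ)) (hEint k)
        (by filter_upwards [hEbdd k] with ω hω using hω.1)
      rwa [condExp_const hmE] at this
    haveI : (MeasureTheory.ae μ).NeBot := ae_neBot.mpr (IsProbabilityMeasure.ne_zero μ)
    obtain ⟨ω, hω1, hω2⟩ := (h1.and (hEcond k)).exists
    simp only at hω1
    linarith
  -- main case
  set c : ℝ := 2 * A + B with hcdef
  have hc : 0 < c := by simp only [hcdef]; linarith
  set s : ℝ := 4 * (β - α) / c ^ 2 with hsdef
  have hs : 0 ≤ s := by
    apply div_nonneg _ (by positivity)
    linarith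
  set q : ℝ := s * (α - β) + s ^ 2 * c ^ 2 / 8 with hqdef
  set X : Fin n → Ω → ℝ := fun k ω => wE k ω - wV k ω * Δ with hXdef
  set S : ℕ → Ω → ℝ :=
    fun k ω => ∑ j ∈ Finset.univ.filter (fun j : Fin n => (j : ℕ) < k), X j ω with hSdef
  set F : ℕ → MeasurableSpace Ω := fun k =>
    ⨆ (j : Fin n) (_ : (j : ℕ) < k),
      (MeasurableSpace.comap (wV j) inferInstance ⊔ MeasurableSpace.comap (wE j) inferInstance)
    with hFdef
  have hF : ∀ k, F k ≤ ‹MeasurableSpace Ω› := by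
    intro k
    refine iSup_le fun j => iSup_le fun _ => sup_le (hVmeas j).comap_le (hEmeas j).comap_le
  -- basic properties of X
  have hXmeas : ∀ j, Measurable (X j) := fun j => (hEmeas j).sub ((hVmeas j).mul_const Δ)
  have hXbdd : ∀ j : Fin n, ∀ᵐ ω ∂μ, X j ω ∈ Set.Icc (-(A + B)) A := by
    intro j
    filter_upwards [hVbdd j, hEbdd j] with ω h1 h2
    constructor
    · simp only [hXdef]; linarith [h2.1, h1.2]
    · simp only [hXdef]; linarith [h2.2, h1.1]
  have hXint : ∀ j, Integrable (X j) μ := by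
    intro j
    refine integrable_of_ae_abs_le (hXmeas j).aestronglyMeasurable (C := A + B) ?_
    filter_upwards [hXbdd j] with ω hω
    rw [abs_le]
    exact ⟨by linarith [hω.1], by linarith [hω.2]⟩
  have hXexp_int : ∀ j, Integrable (fun ω => Real.exp (s * X j ω)) μ := by
    intro j
    refine integrable_of_ae_abs_le
      (((hXmeas j).const_mul s).exp).aestronglyMeasurable (C := Real.exp (s * (A + B))) ?_
    filter_upwards [hXbdd j] with ω hω
    rw [abs_of_pos (Real.exp_pos _)]
    apply Real.exp_le_exp.mpr
    have h1 : X j ω ≤ A + B := by linarith [hω.2]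
    nlinarith
  -- properties of S
  have hSmeas : ∀ k, Measurable (S k) := by
    intro k
    exact Finset.measurable_sum _ fun j _ => hXmeas j
  have hSbdd : ∀ k, ∀ᵐ ω ∂μ, |S k ω| ≤ (n : ℝ) * (A + B) := by
    intro k
    have hall : ∀ᵐ ω ∂μ, ∀ j : Fin n, X j ω ∈ Set.Icc (-(A + B)) A :=
      (ae_all_iff).mpr hXbdd
    filter_upwards [hall] with ω hω
    calc |S k ω| ≤ ∑ j ∈ Finset.univ.filter (fun j : Fin n => (j : ℕ) < k), |X j ω| :=
          Finset.abs_sum_le_sum_abs _ _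
      _ ≤ ∑ _j ∈ Finset.univ.filter (fun j : Fin n => (j : ℕ) < k), (A + B) := by
          refine Finset.sum_le_sum fun j _ => ?_
          rw [abs_le]
          exact ⟨by linarith [(hω j).1], by linarith [(hω j).2]⟩
      _ = ((Finset.univ.filter (fun j : Fin n => (j : ℕ) < k)).card : ℝ) * (A + B) := by
          rw [Finset.sum_const, nsmul_eq_mul]
      _ ≤ (n : ℝ) * (A + B) := by
          apply mul_le_mul_of_nonneg_right _ hAB.le
          have := Finset.card_filter_le (Finset.univ : Finset (Fin n))
            (fun j : Fin n => (j : ℕ) < k)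
          have hcard : (Finset.univ : Finset (Fin n)).card = n := Finset.card_univ.trans (Fintype.card_fin n)
          exact_mod_cast le_trans this (le_of_eq hcard)
  have hSexp_le : ∀ k, ∀ᵐ ω ∂μ, Real.exp (s * S k ω) ≤ Real.exp (s * ((n : ℝ) * (A + B))) := by
    intro k
    filter_upwards [hSbdd k] with ω hω
    apply Real.exp_le_exp.mpr
    have := le_abs_self (S k ω)
    nlinarith [abs_nonneg (S k ω)]
  have hSexp_int : ∀ k, Integrable (fun ω => Real.exp (s * S k ω)) μ := by
    intro k
    refine integrable_of_ae_abs_le (((hSmeas k).const_mul s).exp).aestronglyMeasurable (C := Real.exp (s * ((n : ℝ) * (A + B)))) ?_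
    filter_upwards [hSexp_le k] with ω hω
    rw [abs_of_pos (Real.exp_pos _)]
    exact hω
  -- conditional mean of X given the past
  set mV : Fin n → MeasurableSpace Ω := fun k =>
    (⨆ (j : Fin n) (_ : j ≠ k), MeasurableSpace.comap (wV j) inferInstance) ⊔
      (⨆ j : Fin n, MeasurableSpace.comap (wE j) inferInstance) with hmVdef
  set mEa : Fin n → MeasurableSpace Ω := fun k =>
    (⨆ j : Fin n, MeasurableSpace.comap (wV j) inferInstance) ⊔
      (⨆ (j : Fin n) (_ : j ≠ k), MeasurableSpace.comap (wE j) inferInstance) with hmEadef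
  have hmV : ∀ k, mV k ≤ ‹MeasurableSpace Ω› := by
    intro k
    refine sup_le (iSup_le fun j => iSup_le fun _ => (hVmeas j).comap_le) ?_
    exact iSup_le fun j => (hEmeas j).comap_le
  have hmEa : ∀ k, mEa k ≤ ‹MeasurableSpace Ω› := by
    intro k
    refine sup_le (iSup_le fun j => (hVmeas j).comap_le) ?_
    exact iSup_le fun j => iSup_le fun _ => (hEmeas j).comap_le
  have hcondX : ∀ k : Fin n, μ[X k|F (k : ℕ)] ≤ᵐ[μ] fun _ => α - β := by
    intro k
    have hne : ∀ j : Fin n, (j : ℕ) < (k : ℕ) → j ≠ k := by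
      intro j hj h
      rw [h] at hj
      exact lt_irrefl _ hj
    have hFmV : F (k : ℕ) ≤ mV k := by
      refine iSup_le fun j => iSup_le fun hj => sup_le ?_ ?_
      · exact le_trans (le_iSup₂ (f := fun (j : Fin n) (_ : j ≠ k) =>
          MeasurableSpace.comap (wV j) inferInstance) j (hne j hj)) le_sup_left
      · exact le_trans (le_iSup (fun j : Fin n =>
          MeasurableSpace.comap (wE j) inferInstance) j) le_sup_right
    have hFmE : F (k : ℕ) ≤ mEa k := by
      refine iSup_le fun j => iSup_le fun hj => sup_le ?_ ?_
      · exact le_trans (le_iSup (fun j : Fin n =>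
          MeasurableSpace.comap (wV j) inferInstance) j) le_sup_left
      · exact le_trans (le_iSup₂ (f := fun (j : Fin n) (_ : j ≠ k) =>
          MeasurableSpace.comap (wE j) inferInstance) j (hne j hj)) le_sup_right
    have hVk : μ[(fun ω => wV k ω * Δ)|F (k : ℕ)] =ᵐ[μ] fun _ => β := by
      calc μ[(fun ω => wV k ω * Δ)|F (k : ℕ)]
          =ᵐ[μ] μ[μ[(fun ω => wV k ω * Δ)|mV k]|F (k : ℕ)] :=
            (condExp_condExp_of_le hFmV (hmV k)).symm
        _ =ᵐ[μ] μ[(fun _ => β)|F (k : ℕ)] := condExp_congr_ae (hVcond k)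
        _ =ᵐ[μ] fun _ => β := by rw [condExp_const (hF (k : ℕ)) β]
    have hEk : μ[wE k|F (k : ℕ)] ≤ᵐ[μ] fun _ => α := by
      have e1 : μ[wE k|F (k : ℕ)] =ᵐ[μ] μ[μ[wE k|mEa k]|F (k : ℕ)] :=
        (condExp_condExp_of_le hFmE (hmEa k)).symm
      have e2 : μ[μ[wE k|mEa k]|F (k : ℕ)] ≤ᵐ[μ] μ[(fun _ => α)|F (k : ℕ)] :=
        condExp_mono integrable_condExp (integrable_const α) (hEcond k)
      have e3 : μ[(fun _ : Ω => α)|F (k : ℕ)] = fun _ => α := condExp_const (hF (k : ℕ)) α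
      filter_upwards [e1, e2] with ω h1 h2
      rw [h1]
      simpa [e3] using h2
    have hXeq : X k = wE k - fun ω => wV k ω * Δ := rfl
    have hXk : μ[X k|F (k : ℕ)] =ᵐ[μ]
        μ[wE k|F (k : ℕ)] - μ[(fun ω => wV k ω * Δ)|F (k : ℕ)] := by
      rw [hXeq]
      exact condExp_sub (hEint k) (hVint k) _
    filter_upwards [hXk, hVk, hEk] with ω h1 h2 h3
    have h2' : (μ[(fun ω => wV k ω * Δ)|F (k : ℕ)]) ω = β := h2
    have h3' : (μ[wE k|F (k : ℕ)]) ω ≤ α := h3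
    have h1' : (μ[X k|F (k : ℕ)]) ω =
        (μ[wE k|F (k : ℕ)]) ω - (μ[(fun ω => wV k ω * Δ)|F (k : ℕ)]) ω := h1
    show (μ[X k|F (k : ℕ)]) ω ≤ α - β
    rw [h1', h2']
    linarith
  -- per-step bound on the conditional mgf
  have hstep : ∀ k : Fin n,
      μ[fun ω => Real.exp (s * X k ω)|F (k : ℕ)] ≤ᵐ[μ] fun _ => Real.exp q := by
    intro k
    have hab : -(A + B) < A := by linarith
    have h1 : α - β ≤ A := by linarith
    have h2 : -(A + B) ≤ α - β := by linarith
    have := cond_hoeffding (μ := μ) (hF (k : ℕ)) hab hs (hXint k) (hXexp_int k)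
      (hXbdd k) h2 h1 (hcondX k)
    have hba : A - -(A + B) = c := by simp only [hcdef]; ring
    rw [hba] at this
    exact this
  -- the key induction
  have key : ∀ k, k ≤ n → ∫ ω, Real.exp (s * S k ω) ∂μ ≤ Real.exp ((k : ℝ) * q) := by
    intro k
    induction k with
    | zero =>
      intro _
      have h0 : ∀ ω, S 0 ω = 0 := by
        intro ω
        simp [hSdef]
      simp only [h0, mul_zero, Real.exp_zero, integral_const, measure_univ,
        ENNReal.toReal_one, smul_eq_mul, mul_one, Nat.cast_zero, zero_mul, le_refl,
        probReal_univ]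
    | succ k ih =>
      intro hk1
      have hk : k < n := hk1
      have ihk := ih (le_of_lt hk)
      set kk : Fin n := ⟨k, hk⟩ with hkkdef
      have hsplit : (Finset.univ.filter fun j : Fin n => (j : ℕ) < k + 1) =
          insert kk (Finset.univ.filter fun j : Fin n => (j : ℕ) < k) := by
        ext j
        simp only [Finset.mem_filter, Finset.mem_univ, true_and, Finset.mem_insert]
        have hiff : j = kk ↔ (j : ℕ) = k := by
          rw [Fin.ext_iff]
        rw [hiff]
        omega
      have hnotmem : kk ∉ Finset.univ.filter fun j : Fin n => (j : ℕ) < k := by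
        simp [hkkdef]
      have hS1 : ∀ ω, S (k + 1) ω = X kk ω + S k ω := by
        intro ω
        simp only [hSdef]
        rw [hsplit, Finset.sum_insert hnotmem]
      set f : Ω → ℝ := fun ω => Real.exp (s * S k ω) with hfdef
      set g : Ω → ℝ := fun ω => Real.exp (s * X kk ω) with hgdef
      have hfg : (fun ω => Real.exp (s * S (k + 1) ω)) = f * g := by
        funext ω
        simp only [Pi.mul_apply, hfdef, hgdef]
        rw [hS1 ω, ← Real.exp_add]
        ring_nf
      -- F k-measurability of f
      have hSFmeas : Measurable[F k] (S k) := by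
        apply Finset.measurable_sum
        intro j hj
        have hjk : (j : ℕ) < k := (Finset.mem_filter.mp hj).2
        have hVle : MeasurableSpace.comap (wV j) inferInstance ≤ F k :=
          le_trans le_sup_left (le_iSup₂ (f := fun (j : Fin n) (_ : (j : ℕ) < k) =>
            (MeasurableSpace.comap (wV j) inferInstance ⊔
              MeasurableSpace.comap (wE j) inferInstance)) j hjk)
        have hEle : MeasurableSpace.comap (wE j) inferInstance ≤ F k :=
          le_trans le_sup_right (le_iSup₂ (f := fun (j : Fin n) (_ : (j : ℕ) < k) =>
            (MeasurableSpace.comap (wV j) inferInstance ⊔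
              MeasurableSpace.comap (wE j) inferInstance)) j hjk)
        have hVj : Measurable[F k] (wV j) :=
          (Measurable.of_comap_le le_rfl).mono hVle le_rfl
        have hEj : Measurable[F k] (wE j) :=
          (Measurable.of_comap_le le_rfl).mono hEle le_rfl
        exact hEj.sub (hVj.mul_const Δ)
      have hfSM : StronglyMeasurable[F k] f :=
        (((hSFmeas.const_mul s).exp)).stronglyMeasurable
      have hIg : Integrable g μ := hXexp_int kk
      have hIfg : Integrable (f * g) μ := hfg ▸ hSexp_int (k + 1)
      have hIf : Integrable f μ := hSexp_int k
      have hpull := condExp_mul_of_stronglyMeasurable_left hfSM hIfg hIg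
      have hgnonneg : 0 ≤ᵐ[μ] g := Filter.Eventually.of_forall fun ω => (Real.exp_pos _).le
      have hcenonneg : 0 ≤ᵐ[μ] μ[g|F k] := condExp_nonneg hgnonneg
      have hI1 : Integrable (fun ω => f ω * (μ[g|F k]) ω) μ := by
        refine integrable_of_ae_abs_le ?_ (C := Real.exp (s * ((n : ℝ) * (A + B))) * Real.exp q) ?_
        · exact (((hSmeas k).const_mul s).exp).aestronglyMeasurable.mul
            ((stronglyMeasurable_condExp.mono (hF k)).aestronglyMeasurable)
        · filter_upwards [hSexp_le k, hcenonneg, hstep kk] with ω h1 h2 h3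
          rw [abs_mul, abs_of_pos (Real.exp_pos _), abs_of_nonneg h2]
          exact mul_le_mul h1 h3 h2 (Real.exp_pos _).le
      have hI2 : Integrable (fun ω => f ω * Real.exp q) μ := hIf.mul_const _
      calc ∫ ω, Real.exp (s * S (k + 1) ω) ∂μ
          = ∫ ω, (f * g) ω ∂μ := by rw [hfg]
        _ = ∫ ω, (μ[f * g|F k]) ω ∂μ := (integral_condExp (hF k)).symm
        _ = ∫ ω, f ω * (μ[g|F k]) ω ∂μ := by
            refine integral_congr_ae ?_
            filter_upwards [hpull] with ω hω
            rw [hω]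
            simp [Pi.mul_apply]
        _ ≤ ∫ ω, f ω * Real.exp q ∂μ := by
            refine integral_mono_ae hI1 hI2 ?_
            filter_upwards [hstep kk, hcenonneg] with ω h1 h2
            exact mul_le_mul_of_nonneg_left h1 (Real.exp_pos _).le
        _ = (∫ ω, f ω ∂μ) * Real.exp q := by rw [integral_mul_const]
        _ ≤ Real.exp ((k : ℝ) * q) * Real.exp q :=
            mul_le_mul_of_nonneg_right ihk (Real.exp_pos _).le
        _ = Real.exp (((k : ℕ) + 1 : ℝ) * q) := by
            rw [← Real.exp_add]
            congr 1
            ring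
        _ = Real.exp (((k + 1 : ℕ) : ℝ) * q) := by push_cast; ring_nf
  -- identify the target set
  have hSn : ∀ ω, (∑ k, -(wV k ω * Δ)) + ∑ k, wE k ω = S n ω := by
    intro ω
    have hfilt : (Finset.univ.filter fun j : Fin n => (j : ℕ) < n) = Finset.univ := by
      apply Finset.filter_true_of_mem
      intro j _
      exact j.isLt
    simp only [hSdef, hfilt, hXdef]
    rw [Finset.sum_sub_distrib, Finset.sum_neg_distrib]
    ring
  have hsetmeas : MeasurableSet {ω | (0 : ℝ) ≤ S n ω} :=
    measurableSet_le measurable_const (hSmeas n)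
  have hseteq : {ω | (∑ k, -(wV k ω * Δ)) + ∑ k, wE k ω < 0} = {ω | (0 : ℝ) ≤ S n ω}ᶜ := by
    ext ω
    simp only [Set.mem_setOf_eq, Set.mem_compl_iff, not_le, hSn ω]
  rw [hseteq, prob_compl_eq_one_sub hsetmeas,
    ENNReal.toReal_sub_of_le prob_le_one ENNReal.one_ne_top, ENNReal.toReal_one]
  apply sub_le_sub_left
  -- Markov step
  have hsub : {ω | (0 : ℝ) ≤ S n ω} ⊆ {ω | (1 : ℝ) ≤ Real.exp (s * S n ω)} := by
    intro ω hω
    simp only [Set.mem_setOf_eq] at *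
    rw [show (1 : ℝ) = Real.exp 0 by rw [Real.exp_zero]]
    exact Real.exp_le_exp.mpr (mul_nonneg hs hω)
  have hmarkov : (μ {ω | (0 : ℝ) ≤ S n ω}).toReal ≤ ∫ ω, Real.exp (s * S n ω) ∂μ := by
    have h1 : (μ {ω | (0 : ℝ) ≤ S n ω}).toReal ≤
        (μ {ω | (1 : ℝ) ≤ Real.exp (s * S n ω)}).toReal :=
      ENNReal.toReal_mono (measure_ne_top μ _) (measure_mono hsub)
    have h2 := mul_meas_ge_le_integral_of_nonneg
      (μ := μ) (f := fun ω => Real.exp (s * S n ω))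
      (Filter.Eventually.of_forall fun ω => (Real.exp_pos _).le) (hSexp_int n) 1
    rw [one_mul] at h2
    exact le_trans h1 h2
  -- final exponent comparison
  have hnq : (n : ℝ) * q ≤ -(1 / 2) * ((α - β) / (A + B)) ^ 2 * (m : ℝ) := by
    have hcne : c ≠ 0 := hc.ne'
    have hq : q = -(2 * (β - α) ^ 2 / c ^ 2) := by
      simp only [hqdef, hsdef]
      field_simp
      ring
    have hkey : c ^ 2 ≤ 4 * (A + B) ^ 2 := by
      rw [hcdef]
      nlinarith [mul_pos hA hB0, sq_nonneg B]
    have hqle : q ≤ -((1 / 2) * ((α - β) / (A + B)) ^ 2) := by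
      rw [hq, neg_le_neg_iff, div_pow]
      have e2 : (1 / 2) * ((α - β) ^ 2 / (A + B) ^ 2) = (α - β) ^ 2 / (2 * (A + B) ^ 2) := by
        rw [div_mul_eq_mul_div, one_mul, div_div, mul_comm ((A + B) ^ 2) 2]
      rw [e2, div_le_div_iff₀ (by positivity) (by positivity)]
      have heps : (α - β) ^ 2 = (β - α) ^ 2 := by ring
      rw [heps]
      nlinarith [mul_nonneg (sq_nonneg (β - α)) (sub_nonneg.mpr hkey)]
    have hq0 : q ≤ 0 := by
      refine le_trans hqle ?_
      simp only [neg_nonpos]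
      positivity
    calc (n : ℝ) * q ≤ (m : ℝ) * q := by
          apply mul_le_mul_of_nonpos_right _ hq0
          exact_mod_cast hnm
      _ ≤ (m : ℝ) * (-((1 / 2) * ((α - β) / (A + B)) ^ 2)) :=
          mul_le_mul_of_nonneg_left hqle (Nat.cast_nonneg m)
      _ = -(1 / 2) * ((α - β) / (A + B)) ^ 2 * (m : ℝ) := by ring
  calc (μ {ω | (0 : ℝ) ≤ S n ω}).toReal
      ≤ ∫ ω, Real.exp (s * S n ω) ∂μ := hmarkov
    _ ≤ Real.exp ((n : ℝ) * q) := key n le_rfl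
    _ ≤ Real.exp (-(1 / 2) * ((α - β) / (A + B)) ^ 2 * (m : ℝ)) := Real.exp_le_exp.mpr hnq
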